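/- Let V be a finite-dimensional complex normed vector space of complex dimension n, with Borel σ-algebra and additive Haar measure μ. Let F₁, F₂ be pseudonorms on V with unit balls Ω₁, Ω₂, satisfying α·F₁ ≤ F₂ ≤ β·F₁ with 0 < α ≤ β, and let h₁, h₂ be positive definite Hermitian forms on V which are the Binet–Legendre metrics of Ω₁ and Ω₂ respectively. If there exists v ≠ 0 for which one of the two comparison inequalities is an equality, i.e. h₂(v, v) = (β^{2n+2}/α^{2n}) · h₁(v, v) or h₂(v, v) = (α^{2n+2}/β^{2n}) · h₁(v, v), then α = β, F₂ = β·F₁ identically on V, and h₂(v, w) = β² · h₁(v, w) for all v, w ∈ V. -/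

import Mathlib

open MeasureTheory

/-- The dual complex Binet–Legendre form of a set `Ω`:
`g*_Ω(θ, φ) = ((n+1)/μ(Ω)) ∫_Ω θ(η) conj(φ(η)) dμ(η)`. -/
noncomputable def dualBL {V : Type*} [NormedAddCommGroup V] [NormedSpace ℂ V]
    [MeasurableSpace V] (μ : Measure V) (n : ℕ) (Ω : Set V)
    (θ φ : V →ₗ[ℂ] ℂ) : ℂ :=
  (((n : ℂ) + 1) / ((μ Ω).toReal : ℂ)) * ∫ η in Ω, θ η * (starRingEnd ℂ) (φ η) ∂μ

/-- A pseudonorm: nonnegative, absolutely homogeneous over `ℂ`, vanishing only at `0`,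
with open bounded unit ball. -/
def IsPseudonorm {V : Type*} [NormedAddCommGroup V] [NormedSpace ℂ V]
    (F : V → ℝ) : Prop :=
  (∀ v : V, 0 ≤ F v) ∧
  (∀ (c : ℂ) (v : V), F (c • v) = ‖c‖ * F v) ∧
  (∀ v : V, F v = 0 → v = 0) ∧
  IsOpen {v : V | F v < 1} ∧ Bornology.IsBounded {v : V | F v < 1}

/-- A Hermitian form: conjugate-linear in the first argument, complex-linear in the
second, with `h(w,v) = conj (h(v,w))`. -/
def IsHermitianForm {V : Type*} [AddCommGroup V] [Module ℂ V] (h : V → V → ℂ) : Prop :=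
  (∀ (c : ℂ) (v w : V), h (c • v) w = (starRingEnd ℂ) c * h v w) ∧
  (∀ v v' w : V, h (v + v') w = h v w + h v' w) ∧
  (∀ (c : ℂ) (v w : V), h v (c • w) = c * h v w) ∧
  (∀ v w w' : V, h v (w + w') = h v w + h v w') ∧
  (∀ v w : V, h w v = (starRingEnd ℂ) (h v w))

/-- Positive definiteness: `h(v,v) > 0` for every `v ≠ 0`. -/
def IsPosDefForm {V : Type*} [AddCommGroup V] [Module ℂ V] (h : V → V → ℂ) : Prop :=
  ∀ v : V, v ≠ 0 → 0 < (h v v).re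

/-- `h` is the Binet–Legendre metric of `Ω`: there is a Riesz map `r` for `h`
(`θ(v) = h(r θ, v)` for all `v`) such that the dual Binet–Legendre form of `Ω`
coincides with `h` composed with `r`. -/
def IsBLMetric {V : Type*} [NormedAddCommGroup V] [NormedSpace ℂ V]
    [MeasurableSpace V] (μ : Measure V) (n : ℕ) (Ω : Set V)
    (h : V → V → ℂ) : Prop :=
  ∃ r : (V →ₗ[ℂ] ℂ) → V,
    (∀ (θ : V →ₗ[ℂ] ℂ) (v : V), θ v = h (r θ) v) ∧
    (∀ θ φ : V →ₗ[ℂ] ℂ, dualBL μ n Ω θ φ = h (r θ) (r φ))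


set_option linter.unusedSectionVars false
open Pointwise

section HermAux
variable {V : Type*} [AddCommGroup V] [Module ℂ V] {h : V → V → ℂ}

lemma herm_zero_left (hh : IsHermitianForm h) (w : V) : h 0 w = 0 := by
  have := hh.1 0 0 w
  simpa using this

lemma herm_zero_right (hh : IsHermitianForm h) (v : V) : h v 0 = 0 := by
  have := hh.2.2.1 0 v 0
  simpa using this

lemma herm_sub_left (hh : IsHermitianForm h) (v v' w : V) :
    h (v - v') w = h v w - h v' w := by
  rw [sub_eq_add_neg, ← neg_one_smul ℂ v', hh.2.1, hh.1]
  simp [sub_eq_add_neg]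

lemma herm_sub_right (hh : IsHermitianForm h) (v w w' : V) :
    h v (w - w') = h v w - h v w' := by
  rw [sub_eq_add_neg, ← neg_one_smul ℂ w', hh.2.2.2.1, hh.2.2.1]
  ring

lemma herm_self_real (hh : IsHermitianForm h) (v : V) : h v v = ((h v v).re : ℂ) := by
  have := hh.2.2.2.2 v v
  exact ((Complex.conj_eq_iff_re).mp this.symm).symm

lemma herm_self_nonneg (hh : IsHermitianForm h) (hp : IsPosDefForm h) (v : V) :
    0 ≤ (h v v).re := by
  rcases eq_or_ne v 0 with rfl | hv
  · simp [herm_zero_left hh]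
  · exact (hp v hv).le

/-- injectivity of `v ↦ h v ·` -/
lemma herm_ext (hh : IsHermitianForm h) (hp : IsPosDefForm h) {u u' : V}
    (H : ∀ x, h u x = h u' x) : u = u' := by
  by_contra hne
  have hz : u - u' ≠ 0 := sub_ne_zero.mpr hne
  have : h (u - u') (u - u') = 0 := by
    rw [herm_sub_left hh, H (u - u'), sub_self]
  have := hp _ hz
  rw [‹h (u - u') (u - u') = 0›] at this
  simp at this

/-- Cauchy–Schwarz -/
lemma herm_cauchy_schwarz (hh : IsHermitianForm h) (hp : IsPosDefForm h) (x y : V) :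
    Complex.normSq (h x y) ≤ (h x x).re * (h y y).re := by
  rcases eq_or_ne y 0 with rfl | hy
  · simp [herm_zero_right hh]
  set d : ℝ := (h y y).re with hd
  have hd0 : 0 < d := hp y hy
  set t : ℂ := h x y with ht
  have hyx : h y x = (starRingEnd ℂ) t := hh.2.2.2.2 x y ▸ rfl
  have hyy : h y y = (d : ℂ) := herm_self_real hh y
  set z : V := (d : ℂ) • x - (starRingEnd ℂ) t • y with hz
  have hzz : h z z = (d : ℂ) ^ 2 * h x x - (d : ℂ) * (Complex.normSq t : ℂ) := by
    rw [hz]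
    simp only [herm_sub_left hh, herm_sub_right hh, hh.1, hh.2.2.1]
    rw [← ht, hyx, hyy]
    simp only [Complex.conj_ofReal, RingHomCompTriple.comp_apply, RingHom.id_apply,
      Complex.normSq_eq_conj_mul_self]
    ring
  have hre : 0 ≤ (h z z).re := herm_self_nonneg hh hp z
  rw [hzz, ← Complex.ofReal_pow] at hre
  simp only [Complex.sub_re, Complex.re_ofReal_mul, Complex.ofReal_re] at hre
  nlinarith [Complex.normSq_nonneg t]

end HermAux

section MeasAux
variable {V : Type*} [NormedAddCommGroup V] [NormedSpace ℂ V] [FiniteDimensional ℂ V]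
  [MeasurableSpace V] [BorelSpace V] (μ : Measure V) [μ.IsAddHaarMeasure]

lemma lin_real_smul (θ : V →ₗ[ℂ] ℂ) (t : ℝ) (x : V) : θ (t • x) = (t : ℂ) * θ x := by
  rw [← Complex.coe_smul, _root_.map_smul, smul_eq_mul]

lemma meas_smul_set {t : ℝ} (ht : 0 < t) (s : Set V) :
    μ (t • s) = ENNReal.ofReal (t ^ Module.finrank ℝ V) * μ s := by
  rw [Measure.addHaar_smul, abs_of_nonneg (pow_nonneg ht.le _)]

lemma setIntegral_smul_set {E : Type*} [NormedAddCommGroup E] [NormedSpace ℝ E]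
    (f : V → E) {t : ℝ} (ht : 0 < t) (s : Set V) :
    ∫ x in t • s, f x ∂μ = (t ^ Module.finrank ℝ V) • ∫ x in s, f (t • x) ∂μ := by
  rw [Measure.setIntegral_comp_smul_of_pos μ f s ht, smul_smul]
  rw [mul_inv_cancel₀ (by positivity), one_smul]

lemma integrableOn_of_bounded {f : V → ℝ} (hf : Continuous f) {s : Set V}
    (hs : Bornology.IsBounded s) : IntegrableOn f s μ :=
  (hf.continuousOn.integrableOn_compact hs.isCompact_closure).mono_set subset_closure

lemma ball_zero_mem {F : V → ℝ} (hF : IsPseudonorm F) : (0 : V) ∈ {v : V | F v < 1} := by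
  have h0 : F 0 = 0 := by have := hF.2.1 0 0; simpa using this
  simp [h0]

lemma ball_toReal_pos {F : V → ℝ} (hF : IsPseudonorm F) :
    0 < (μ {v : V | F v < 1}).toReal := by
  refine ENNReal.toReal_pos ?_ ?_
  · exact ((hF.2.2.2.1.measure_pos μ ⟨0, ball_zero_mem hF⟩)).ne'
  · exact hF.2.2.2.2.measure_lt_top.ne

end MeasAux

section More
set_option linter.unusedSectionVars false
variable {V : Type*} [NormedAddCommGroup V] [NormedSpace ℂ V] [FiniteDimensional ℂ V]
  [MeasurableSpace V] [BorelSpace V] (μ : Measure V) [μ.IsAddHaarMeasure]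


lemma dualBL_self_re (n : ℕ) (Ω : Set V) (θ : V →ₗ[ℂ] ℂ) :
    (dualBL μ n Ω θ θ).re
      = (((n : ℝ) + 1) / (μ Ω).toReal) * ∫ x in Ω, Complex.normSq (θ x) ∂μ := by
  unfold dualBL
  have h1 : ∫ η in Ω, θ η * (starRingEnd ℂ) (θ η) ∂μ
      = ((∫ x in Ω, Complex.normSq (θ x) ∂μ : ℝ) : ℂ) := by
    simp_rw [Complex.mul_conj]
    exact integral_ofReal
  rw [h1, show ((n : ℂ) + 1) / ((μ Ω).toReal : ℂ)
      = ((((n : ℝ) + 1) / (μ Ω).toReal : ℝ) : ℂ) by push_cast; ring,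
    ← Complex.ofReal_mul, Complex.ofReal_re]

lemma normSq_setIntegral_smul (θ : V →ₗ[ℂ] ℂ) {t : ℝ} (ht : 0 < t) (s : Set V) :
    ∫ x in t • s, Complex.normSq (θ x) ∂μ
      = t ^ (Module.finrank ℝ V + 2) * ∫ x in s, Complex.normSq (θ x) ∂μ := by
  rw [setIntegral_smul_set μ _ ht]
  have h2 : ∀ x : V, Complex.normSq (θ (t • x)) = t ^ 2 * Complex.normSq (θ x) := by
    intro x
    rw [lin_real_smul, Complex.normSq_mul, Complex.normSq_ofReal]
    ring
  simp_rw [h2]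
  rw [integral_const_mul, smul_eq_mul]
  ring

lemma mul_conj_setIntegral_smul (θ φ : V →ₗ[ℂ] ℂ) {t : ℝ} (ht : 0 < t) (s : Set V) :
    ∫ x in t • s, θ x * (starRingEnd ℂ) (φ x) ∂μ
      = ((t ^ (Module.finrank ℝ V + 2) : ℝ) : ℂ)
          * ∫ x in s, θ x * (starRingEnd ℂ) (φ x) ∂μ := by
  rw [setIntegral_smul_set μ _ ht]
  have h2 : ∀ x : V, θ (t • x) * (starRingEnd ℂ) (φ (t • x))
      = ((t : ℂ) * (t : ℂ)) * (θ x * (starRingEnd ℂ) (φ x)) := by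
    intro x
    rw [lin_real_smul, lin_real_smul, map_mul, Complex.conj_ofReal]
    ring
  simp_rw [h2]
  rw [integral_const_mul, Complex.real_smul]
  push_cast
  ring

lemma ker_measure_zero (θ : V →ₗ[ℂ] ℂ) (hθ : θ ≠ 0) : μ {x : V | θ x = 0} = 0 := by
  have hset : {x : V | θ x = 0}
      = (Submodule.restrictScalars ℝ (LinearMap.ker θ) : Set V) := by
    ext x; simp [LinearMap.mem_ker]
  rw [hset]
  refine Measure.addHaar_submodule μ _ ?_
  intro htop
  apply hθ
  ext x
  have : x ∈ Submodule.restrictScalars ℝ (LinearMap.ker θ) := htop ▸ Submodule.mem_top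
  simpa [LinearMap.mem_ker] using this

lemma measure_eq_of_integral_eq (θ : V →ₗ[ℂ] ℂ) (hθ : θ ≠ 0) {S T : Set V}
    (hST : S ⊆ T) (hSm : MeasurableSet S) (hTm : MeasurableSet T)
    (hTb : Bornology.IsBounded T)
    (hI : ∫ x in S, Complex.normSq (θ x) ∂μ = ∫ x in T, Complex.normSq (θ x) ∂μ) :
    μ T = μ S := by
  set f : V → ℝ := fun x => Complex.normSq (θ x) with hf
  have hfc : Continuous f := Complex.continuous_normSq.comp θ.continuous_of_finiteDimensional
  have hfint : IntegrableOn f T μ := integrableOn_of_bounded μ hfc hTb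
  have hUn : S ∪ (T \ S) = T := Set.union_diff_cancel hST
  have hsplit : ∫ x in T, f x ∂μ = (∫ x in S, f x ∂μ) + ∫ x in T \ S, f x ∂μ := by
    have h' := setIntegral_union (f := f) (μ := μ) disjoint_sdiff_self_right (hTm.diff hSm)
      (hfint.mono_set hST) (hfint.mono_set Set.diff_subset)
    rw [hUn] at h'
    exact h'
  have hzero : ∫ x in T \ S, f x ∂μ = 0 := by
    have := hI
    rw [hsplit] at this
    linarith
  have hsupp : μ (Function.support f ∩ (T \ S)) = 0 := by
    by_contra hne
    have hpos : 0 < μ (Function.support f ∩ (T \ S)) := pos_iff_ne_zero.mpr hne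
    have : 0 < ∫ x in T \ S, f x ∂μ := by
      refine (setIntegral_pos_iff_support_of_nonneg_ae ?_ (hfint.mono_set Set.diff_subset)).2 hpos
      exact Filter.Eventually.of_forall fun x => Complex.normSq_nonneg _
    linarith
  have hker : μ {x : V | θ x = 0} = 0 := ker_measure_zero μ θ hθ
  have hsub : T \ S ⊆ (Function.support f ∩ (T \ S)) ∪ {x : V | θ x = 0} := by
    intro x hx
    by_cases hx0 : θ x = 0
    · exact Or.inr hx0
    · exact Or.inl ⟨by simp [hf, Function.mem_support, Complex.normSq_eq_zero, hx0], hx⟩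
  have hdiff : μ (T \ S) = 0 := by
    refine le_antisymm ?_ zero_le
    calc μ (T \ S) ≤ μ ((Function.support f ∩ (T \ S)) ∪ {x : V | θ x = 0}) :=
          measure_mono hsub
      _ ≤ μ (Function.support f ∩ (T \ S)) + μ {x : V | θ x = 0} := measure_union_le _ _
      _ = 0 := by rw [hsupp, hker, add_zero]
  refine le_antisymm ?_ (measure_mono hST)
  calc μ T = μ (S ∪ (T \ S)) := by rw [hUn]
    _ ≤ μ S + μ (T \ S) := measure_union_le _ _
    _ = μ S := by rw [hdiff, add_zero]

end More

section Core
set_option linter.unusedSectionVars false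
set_option maxHeartbeats 1000000
variable {V : Type*} [NormedAddCommGroup V] [NormedSpace ℂ V] [FiniteDimensional ℂ V]
  [MeasurableSpace V] [BorelSpace V]

lemma aux_alpha_eq_beta (μ : Measure V) [μ.IsAddHaarMeasure]
    (n : ℕ) (hn : Module.finrank ℂ V = n)
    (F₁ F₂ : V → ℝ) (hF₁ : IsPseudonorm F₁) (hF₂ : IsPseudonorm F₂)
    (α β : ℝ) (hα : 0 < α) (hαβ : α ≤ β)
    (hcomp : ∀ v : V, α * F₁ v ≤ F₂ v ∧ F₂ v ≤ β * F₁ v)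
    (h₁ h₂ : V → V → ℂ)
    (h₁herm : IsHermitianForm h₁) (h₁pos : IsPosDefForm h₁)
    (h₂herm : IsHermitianForm h₂) (h₂pos : IsPosDefForm h₂)
    (h₁BL : IsBLMetric μ n {v : V | F₁ v < 1} h₁)
    (h₂BL : IsBLMetric μ n {v : V | F₂ v < 1} h₂)
    (v : V) (hv : v ≠ 0)
    (hveq : (h₂ v v).re = (β ^ (2 * n + 2) / α ^ (2 * n)) * (h₁ v v).re) :
    α = β := by
  by_contra hne
  have hlt : α < β := lt_of_le_of_ne hαβ hne
  have hβ : 0 < β := hα.trans_le hαβ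
  have hβi : (0:ℝ) < β⁻¹ := inv_pos.2 hβ
  have hαi : (0:ℝ) < α⁻¹ := inv_pos.2 hα
  set Ω₁ : Set V := {x : V | F₁ x < 1} with hΩ₁def
  set Ω₂ : Set V := {x : V | F₂ x < 1} with hΩ₂def
  have hnpos : 0 < n := by
    have : Nontrivial V := nontrivial_of_ne v 0 hv
    have := Module.finrank_pos (R := ℂ) (M := V)
    omega
  have hd : Module.finrank ℝ V = 2 * n := by
    rw [finrank_real_of_complex, hn]
  obtain ⟨r₁, hr₁, hg₁⟩ := h₁BL
  obtain ⟨r₂, hr₂, hg₂⟩ := h₂BL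
  -- the test functional
  set θ : V →ₗ[ℂ] ℂ :=
    { toFun := fun x => h₂ v x
      map_add' := h₂herm.2.2.2.1 v
      map_smul' := fun c x => by simpa using h₂herm.2.2.1 c v x } with hθdef
  have hθv : θ v = h₂ v v := rfl
  have h2re : 0 < (h₂ v v).re := h₂pos v hv
  have h1re : 0 < (h₁ v v).re := h₁pos v hv
  have hθvne : θ v ≠ 0 := by
    rw [hθv]
    intro h
    rw [h] at h2re
    simp at h2re
  have hθne : θ ≠ 0 := by
    intro h
    apply hθvne
    rw [h]
    rfl
  have hr₂θ : r₂ θ = v := herm_ext h₂herm h₂pos (fun x => (hr₂ θ x).symm)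
  have hr1ne : r₁ θ ≠ 0 := by
    intro h
    apply hθvne
    rw [hr₁ θ v, h, herm_zero_left h₁herm]
  set G1 : ℝ := (h₁ (r₁ θ) (r₁ θ)).re with hG1def
  have hG1pos : 0 < G1 := h₁pos _ hr1ne
  set m₁ : ℝ := (μ Ω₁).toReal with hm₁def
  set m₂ : ℝ := (μ Ω₂).toReal with hm₂def
  have hm₁pos : 0 < m₁ := ball_toReal_pos μ hF₁
  have hm₂pos : 0 < m₂ := ball_toReal_pos μ hF₂
  set I₁ : ℝ := ∫ x in Ω₁, Complex.normSq (θ x) ∂μ with hI₁def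
  set I₂ : ℝ := ∫ x in Ω₂, Complex.normSq (θ x) ∂μ with hI₂def
  set c : ℝ := (n : ℝ) + 1 with hcdef
  have hcpos : 0 < c := by positivity
  have e2 : (h₂ v v).re = (c / m₂) * I₂ := by
    have h' := congrArg Complex.re (hg₂ θ θ)
    rw [dualBL_self_re, hr₂θ] at h'
    exact h'.symm
  have e1 : G1 = (c / m₁) * I₁ := by
    have h' := congrArg Complex.re (hg₁ θ θ)
    rw [dualBL_self_re] at h'
    exact h'.symm
  have hI₁pos : 0 < I₁ := by
    rcases lt_or_ge 0 I₁ with h | h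
    · exact h
    · exfalso
      have : (c / m₁) * I₁ ≤ 0 :=
        mul_nonpos_of_nonneg_of_nonpos (by positivity) h
      rw [← e1] at this
      linarith
  -- set inclusions
  have hS : β⁻¹ • Ω₁ ⊆ Ω₂ := by
    rintro x ⟨u, hu, rfl⟩
    have hF1u : F₁ u < 1 := hu
    have hhom : F₁ (β⁻¹ • u) = β⁻¹ * F₁ u := by
      rw [← Complex.coe_smul, hF₁.2.1, Complex.norm_real, Real.norm_eq_abs, abs_of_pos hβi]
    have h2le := (hcomp (β⁻¹ • u)).2
    have hle : F₂ (β⁻¹ • u) ≤ β * (β⁻¹ * F₁ u) := by rw [← hhom]; exact h2le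
    have hββ : β * (β⁻¹ * F₁ u) = F₁ u := by field_simp
    show F₂ (β⁻¹ • u) < 1
    rw [hββ] at hle
    exact lt_of_le_of_lt hle hF1u
  have hT : Ω₂ ⊆ α⁻¹ • Ω₁ := by
    intro x hx
    refine ⟨α • x, ?_, ?_⟩
    · have h1le := (hcomp x).1
      have hxlt : F₂ x < 1 := hx
      have hhom : F₁ (α • x) = α * F₁ x := by
        rw [← Complex.coe_smul, hF₁.2.1, Complex.norm_real, Real.norm_eq_abs, abs_of_pos hα]
      show F₁ (α • x) < 1
      rw [hhom]
      linarith
    · simp [smul_smul, inv_mul_cancel₀ hα.ne']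
  -- measurability, boundedness
  have hΩ₁open : IsOpen Ω₁ := hF₁.2.2.2.1
  have hΩ₂open : IsOpen Ω₂ := hF₂.2.2.2.1
  have hmSmeas : MeasurableSet (β⁻¹ • Ω₁) := (hΩ₁open.smul₀ hβi.ne').measurableSet
  have hmΩ₂ : MeasurableSet Ω₂ := hΩ₂open.measurableSet
  have hbΩ₂ : Bornology.IsBounded Ω₂ := hF₂.2.2.2.2
  -- scaling identities
  have hIS : ∫ x in β⁻¹ • Ω₁, Complex.normSq (θ x) ∂μ = β⁻¹ ^ (2 * n + 2) * I₁ := by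
    rw [normSq_setIntegral_smul μ θ hβi Ω₁, hd]
  have hmT : (μ (α⁻¹ • Ω₁)).toReal = α⁻¹ ^ (2 * n) * m₁ := by
    rw [meas_smul_set μ hαi, hd, ENNReal.toReal_mul,
      ENNReal.toReal_ofReal (by positivity)]
  have hmS : (μ (β⁻¹ • Ω₁)).toReal = β⁻¹ ^ (2 * n) * m₁ := by
    rw [meas_smul_set μ hβi, hd, ENNReal.toReal_mul,
      ENNReal.toReal_ofReal (by positivity)]
  set K : ℝ := β ^ (2 * n + 2) / α ^ (2 * n) with hKdef
  have hKpos : 0 < K := by positivity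
  -- integral and measure comparisons
  have hIint : IntegrableOn (fun x => Complex.normSq (θ x)) Ω₂ μ :=
    integrableOn_of_bounded μ
      (Complex.continuous_normSq.comp θ.continuous_of_finiteDimensional) hbΩ₂
  have hI₂ge : β⁻¹ ^ (2 * n + 2) * I₁ ≤ I₂ := by
    rw [← hIS]
    exact setIntegral_mono_set hIint
      (Filter.Eventually.of_forall fun x => Complex.normSq_nonneg _)
      (HasSubset.Subset.eventuallyLE hS)
  have hm₂le : m₂ ≤ α⁻¹ ^ (2 * n) * m₁ := by
    rw [← hmT]
    exact ENNReal.toReal_mono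
      ((meas_smul_set μ hαi Ω₁ ▸ ENNReal.mul_lt_top ENNReal.ofReal_lt_top
        hF₁.2.2.2.2.measure_lt_top).ne)
      (measure_mono hT)
  -- Cauchy-Schwarz and the equality forcing
  have hCS : Complex.normSq (θ v) ≤ G1 * (h₁ v v).re := by
    have hcs := herm_cauchy_schwarz h₁herm h₁pos (r₁ θ) v
    rw [← hr₁ θ v] at hcs
    exact hcs
  have hnsq : Complex.normSq (θ v) = ((h₂ v v).re) ^ 2 := by
    rw [hθv, herm_self_real h₂herm v]
    simp [Complex.normSq_ofReal, sq]
  have hP1 : K * (h₂ v v).re ≤ G1 := by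
    have e' : K * (h₂ v v).re * (h₁ v v).re = ((h₂ v v).re) ^ 2 := by
      rw [hveq]; ring
    have h2' : (K * (h₂ v v).re) * (h₁ v v).re ≤ G1 * (h₁ v v).re := by
      linarith [hCS, hnsq, e']
    exact le_of_mul_le_mul_right h2' h1re
  have hKI : K * (c * I₂) ≤ G1 * m₂ := by
    have h' : K * ((c / m₂) * I₂) ≤ G1 := by rw [← e2]; exact hP1
    have h'' := mul_le_mul_of_nonneg_right h' hm₂pos.le
    calc K * (c * I₂) = K * ((c / m₂) * I₂) * m₂ := by
          field_simp
      _ ≤ G1 * m₂ := h''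
  have hid : K * (c * (β⁻¹ ^ (2 * n + 2) * I₁)) = G1 * (α⁻¹ ^ (2 * n) * m₁) := by
    rw [e1, hKdef]
    field_simp
    rw [← mul_pow, ← mul_pow, mul_one_div_cancel hβ.ne', mul_one_div_cancel hα.ne', one_pow, one_pow]
  have hBm : α⁻¹ ^ (2 * n) * m₁ ≤ m₂ := by
    have h1 : K * (c * (β⁻¹ ^ (2 * n + 2) * I₁)) ≤ K * (c * I₂) := by
      have h0 := mul_le_mul_of_nonneg_left hI₂ge (mul_pos hKpos hcpos).le
      calc K * (c * (β⁻¹ ^ (2 * n + 2) * I₁)) = K * c * (β⁻¹ ^ (2 * n + 2) * I₁) := by ring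
        _ ≤ K * c * I₂ := h0
        _ = K * (c * I₂) := by ring
    have hGB : G1 * (α⁻¹ ^ (2 * n) * m₁) ≤ G1 * m₂ :=
      le_trans (le_trans (le_of_eq hid.symm) h1) hKI
    exact le_of_mul_le_mul_left hGB hG1pos
  have hm₂B : m₂ = α⁻¹ ^ (2 * n) * m₁ := le_antisymm hm₂le hBm
  have hI₂A : I₂ = β⁻¹ ^ (2 * n + 2) * I₁ := by
    have h2 : K * (c * I₂) ≤ K * (c * (β⁻¹ ^ (2 * n + 2) * I₁)) := by
      rw [hid, ← hm₂B]; exact hKI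
    have h3 : I₂ ≤ β⁻¹ ^ (2 * n + 2) * I₁ :=
      le_of_mul_le_mul_left (by rw [mul_assoc, mul_assoc]; exact h2) (mul_pos hKpos hcpos)
    exact le_antisymm h3 hI₂ge
  have hμeq : μ Ω₂ = μ (β⁻¹ • Ω₁) :=
    measure_eq_of_integral_eq μ θ hθne hS hmSmeas hmΩ₂ hbΩ₂
      (by rw [hIS]; exact hI₂A.symm)
  have hm₂S : m₂ = β⁻¹ ^ (2 * n) * m₁ := by
    rw [hm₂def, hμeq]; exact hmS
  have hba : β⁻¹ < α⁻¹ := inv_strictAnti₀ hα hlt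
  have hpow : β⁻¹ ^ (2 * n) < α⁻¹ ^ (2 * n) :=
    pow_lt_pow_left₀ hba hβi.le (by omega)
  nlinarith [mul_pos (sub_pos.mpr hpow) hm₁pos]

end Core


/-- Equality case in the Binet–Legendre comparison: if `α F₁ ≤ F₂ ≤ β F₁`
with `0 < α ≤ β` and equality holds in one of the two comparison inequalities at some
`v ≠ 0`, then `α = β`, `F₂ = β F₁`, and `h₂ = β² h₁`. -/
theorem blMetric_comparison_equality_case
    {V : Type*} [NormedAddCommGroup V] [NormedSpace ℂ V] [FiniteDimensional ℂ V]
    [MeasurableSpace V] [BorelSpace V]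
    (μ : Measure V) [μ.IsAddHaarMeasure]
    (n : ℕ) (hn : Module.finrank ℂ V = n)
    (F₁ F₂ : V → ℝ) (hF₁ : IsPseudonorm F₁) (hF₂ : IsPseudonorm F₂)
    (α β : ℝ) (hα : 0 < α) (hαβ : α ≤ β)
    (hcomp : ∀ v : V, α * F₁ v ≤ F₂ v ∧ F₂ v ≤ β * F₁ v)
    (h₁ h₂ : V → V → ℂ)
    (h₁herm : IsHermitianForm h₁) (h₁pos : IsPosDefForm h₁)
    (h₂herm : IsHermitianForm h₂) (h₂pos : IsPosDefForm h₂)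
    (h₁BL : IsBLMetric μ n {v : V | F₁ v < 1} h₁)
    (h₂BL : IsBLMetric μ n {v : V | F₂ v < 1} h₂)
    (heq : ∃ v : V, v ≠ 0 ∧
      ((h₂ v v).re = (β ^ (2 * n + 2) / α ^ (2 * n)) * (h₁ v v).re ∨
        (h₂ v v).re = (α ^ (2 * n + 2) / β ^ (2 * n)) * (h₁ v v).re)) :
    α = β ∧ (∀ v : V, F₂ v = β * F₁ v) ∧
      (∀ v w : V, h₂ v w = (β ^ 2 : ℂ) * h₁ v w) := by
  classical
  obtain ⟨v, hv, hcase⟩ := heq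
  have hβ : 0 < β := hα.trans_le hαβ
  have hβi : (0:ℝ) < β⁻¹ := inv_pos.2 hβ
  have h2re : 0 < (h₂ v v).re := h₂pos v hv
  have h1re : 0 < (h₁ v v).re := h₁pos v hv
  have hab : α = β := by
    rcases hcase with hveq | hveq
    · exact aux_alpha_eq_beta μ n hn F₁ F₂ hF₁ hF₂ α β hα hαβ hcomp h₁ h₂
        h₁herm h₁pos h₂herm h₂pos h₁BL h₂BL v hv hveq
    · have hveq' : (h₁ v v).re = ((α⁻¹) ^ (2 * n + 2) / (β⁻¹) ^ (2 * n)) * (h₂ v v).re := by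
        rw [hveq]
        field_simp
        rw [← mul_pow, ← mul_pow, one_div_mul_cancel hβ.ne', one_div_mul_cancel hα.ne', one_pow, one_pow]
      have hcomp' : ∀ w : V, β⁻¹ * F₂ w ≤ F₁ w ∧ F₁ w ≤ α⁻¹ * F₂ w := by
        intro w
        obtain ⟨hle1, hle2⟩ := hcomp w
        constructor
        · have := mul_le_mul_of_nonneg_left hle2 hβi.le
          rw [← mul_assoc, inv_mul_cancel₀ hβ.ne', one_mul] at this
          exact this
        · have := mul_le_mul_of_nonneg_left hle1 (inv_pos.2 hα).le
          rw [← mul_assoc, inv_mul_cancel₀ hα.ne', one_mul] at this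
          exact this
      have hres := aux_alpha_eq_beta μ n hn F₂ F₁ hF₂ hF₁ β⁻¹ α⁻¹ hβi
        (inv_anti₀ hα hαβ) hcomp' h₂ h₁ h₂herm h₂pos h₁herm h₁pos
        h₂BL h₁BL v hv hveq'
      exact (inv_inj.mp hres).symm
  subst hab
  have hFeq : ∀ w : V, F₂ w = α * F₁ w := fun w =>
    le_antisymm (hcomp w).2 (hcomp w).1
  refine ⟨rfl, hFeq, ?_⟩
  -- now the metric identity
  have hd : Module.finrank ℝ V = 2 * n := by
    rw [finrank_real_of_complex, hn]
  have hαi : (0:ℝ) < α⁻¹ := inv_pos.2 hα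
  set Ω₁ : Set V := {x : V | F₁ x < 1} with hΩ₁def
  set Ω₂ : Set V := {x : V | F₂ x < 1} with hΩ₂def
  have hhom₁ : ∀ (t : ℝ), 0 < t → ∀ x : V, F₁ (t • x) = t * F₁ x := fun t ht x => by
    rw [← Complex.coe_smul, hF₁.2.1, Complex.norm_real, Real.norm_eq_abs, abs_of_pos ht]
  have hΩeq : Ω₂ = α⁻¹ • Ω₁ := by
    ext x
    constructor
    · intro hx
      have hx' : F₂ x < 1 := hx
      rw [hFeq x] at hx'
      refine ⟨α • x, ?_, ?_⟩
      · show F₁ (α • x) < 1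
        rw [hhom₁ α hα x]
        exact hx'
      · simp [smul_smul, inv_mul_cancel₀ hα.ne']
    · rintro ⟨u, hu, rfl⟩
      have hu' : F₁ u < 1 := hu
      show F₂ (α⁻¹ • u) < 1
      rw [hFeq, hhom₁ α⁻¹ hαi u, ← mul_assoc, mul_inv_cancel₀ hα.ne', one_mul]
      exact hu'
  have hm₁pos : 0 < (μ Ω₁).toReal := ball_toReal_pos μ hF₁
  have hdual : ∀ θ φ : V →ₗ[ℂ] ℂ,
      dualBL μ n Ω₂ θ φ = ((α : ℂ) ^ 2)⁻¹ * dualBL μ n Ω₁ θ φ := by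
    intro θ φ
    unfold dualBL
    rw [hΩeq, mul_conj_setIntegral_smul μ θ φ hαi, meas_smul_set μ hαi, hd,
      ENNReal.toReal_mul, ENNReal.toReal_ofReal (by positivity)]
    have hsc : ((n : ℝ) + 1) / (α⁻¹ ^ (2 * n) * (μ Ω₁).toReal) * α⁻¹ ^ (2 * n + 2)
        = (α ^ 2)⁻¹ * (((n : ℝ) + 1) / (μ Ω₁).toReal) := by
      have hpne : α ^ (2 * n) ≠ 0 := pow_ne_zero _ hα.ne'
      rw [inv_pow, inv_pow, pow_add]
      field_simp
    rw [show ((n : ℂ) + 1) = (((n : ℝ) + 1 : ℝ) : ℂ) by push_cast; ring,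
      show ((α : ℂ) ^ 2)⁻¹ = (((α ^ 2)⁻¹ : ℝ) : ℂ) by push_cast; ring,
      ← Complex.ofReal_div, ← Complex.ofReal_div, ← mul_assoc, ← mul_assoc,
      ← Complex.ofReal_mul, ← Complex.ofReal_mul, hsc]
  obtain ⟨r₁, hr₁, hg₁⟩ := h₁BL
  obtain ⟨r₂, hr₂, hg₂⟩ := h₂BL
  set Θ : V → (V →ₗ[ℂ] ℂ) := fun w =>
    { toFun := fun x => h₂ w x
      map_add' := h₂herm.2.2.2.1 w
      map_smul' := fun c x => by simpa using h₂herm.2.2.1 c w x } with hΘdef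
  have hΘapp : ∀ w x : V, Θ w x = h₂ w x := fun w x => rfl
  have hrΘ : ∀ w : V, r₂ (Θ w) = w := fun w =>
    herm_ext h₂herm h₂pos (fun x => (hr₂ (Θ w) x).symm)
  set T : V → V := fun w => r₁ (Θ w) with hTdef
  have hT : ∀ w x : V, h₁ (T w) x = h₂ w x := fun w x => (hr₁ (Θ w) x).symm
  have hkey : ∀ w u : V, h₂ w u = ((α : ℂ) ^ 2)⁻¹ * h₁ (T w) (T u) := by
    intro w u
    have h' := hdual (Θ w) (Θ u)
    rw [hg₂ (Θ w) (Θ u), hg₁ (Θ w) (Θ u), hrΘ w, hrΘ u] at h'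
    exact h'
  have hTadd : ∀ w w' : V, T (w + w') = T w + T w' := by
    intro w w'
    refine herm_ext h₁herm h₁pos (fun x => ?_)
    rw [hT, h₂herm.2.1, ← hT w x, ← hT w' x, ← h₁herm.2.1]
  have hTsmul : ∀ (a : ℂ) (w : V), T (a • w) = a • T w := by
    intro a w
    refine herm_ext h₁herm h₁pos (fun x => ?_)
    rw [hT, h₂herm.1, ← hT w x, ← h₁herm.1]
  set TL : V →ₗ[ℂ] V :=
    { toFun := T
      map_add' := hTadd
      map_smul' := fun a w => by simpa using hTsmul a w } with hTLdef
  have hTinj : Function.Injective TL := by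
    intro a b hab2
    refine herm_ext h₂herm h₂pos (fun x => ?_)
    have : T a = T b := hab2
    rw [← hT a x, ← hT b x, this]
  have hTsurj : Function.Surjective TL := LinearMap.injective_iff_surjective.mp hTinj
  have hTw : ∀ w : V, T w = ((α : ℂ) ^ 2) • w := by
    intro w
    have hαc : ((α : ℂ) ^ 2) ≠ 0 := by
      simpa using Complex.ofReal_ne_zero.mpr hα.ne'
    have hsnd : ∀ x : V, h₁ x (T w) = h₁ x (((α : ℂ) ^ 2) • w) := by
      intro x
      obtain ⟨v', hv'⟩ := hTsurj x
      have hx : x = T v' := hv'.symm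
      have h1 : h₂ v' w = ((α : ℂ) ^ 2)⁻¹ * h₁ (T v') (T w) := hkey v' w
      have h2 : h₂ v' w = h₁ (T v') w := (hT v' w).symm
      have h3 : h₁ (T v') (T w) = ((α : ℂ) ^ 2) * h₁ (T v') w := by
        rw [← h2, h1, ← mul_assoc, mul_inv_cancel₀ hαc, one_mul]
      rw [hx, h3, h₁herm.2.2.1]
    refine herm_ext h₁herm h₁pos (fun x => ?_)
    have e1 := h₁herm.2.2.2.2 x (T w)
    have e2 := h₁herm.2.2.2.2 x (((α : ℂ) ^ 2) • w)
    rw [e1, e2, hsnd x]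
  intro w u
  have := hT w u
  rw [hTw w, h₁herm.1] at this
  rw [← this]
  congr 1
  rw [← Complex.ofReal_pow, Complex.conj_ofReal, Complex.ofReal_pow]
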